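/- Weyl's inequality: for real symmetric n×n matrices A and B, and indices i, j ≥ 1 with i + j - 1 ≤ n, the (i+j-1)-th largest eigenvalue of A + B is at most the sum of the i-th largest eigenvalue of A and the j-th largest eigenvalue of B. -/

import Mathlib

open Matrix
open scoped RealInnerProductSpace

/-- The eigenvalues of a Hermitian matrix, sorted in decreasing order,
indexed by `Fin n` (index 0 is the largest eigenvalue). -/
noncomputable def eigDesc {n : ℕ} (A : Matrix (Fin n) (Fin n) ℝ)
    (hA : A.IsHermitian) : Fin n → ℝ :=
  fun k => (hA.eigenvalues ∘ Tuple.sort hA.eigenvalues) k.rev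

section weylAux

open Finset

variable {n : ℕ}

private lemma inner_eq_zero_off (u : OrthonormalBasis (Fin n) ℝ (EuclideanSpace ℝ (Fin n)))
    (S : Set (Fin n)) (x : EuclideanSpace ℝ (Fin n))
    (hx : x ∈ Submodule.span ℝ (u '' S)) (k : Fin n) (hk : k ∉ S) :
    ⟪u k, x⟫ = 0 := by
  have hle : Submodule.span ℝ (u '' S) ≤ LinearMap.ker ((innerSL ℝ (u k)).toLinearMap) := by
    rw [Submodule.span_le]
    rintro _ ⟨l, hl, rfl⟩
    simp only [SetLike.mem_coe, LinearMap.mem_ker, ContinuousLinearMap.coe_coe, innerSL_apply_apply]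
    exact u.orthonormal.2 (fun h => hk (h ▸ hl))
  simpa using hle hx

private lemma euclid_eigen (A : Matrix (Fin n) (Fin n) ℝ) (hA : A.IsHermitian) (k : Fin n) :
    Matrix.toEuclideanLin A (hA.eigenvectorBasis k) = hA.eigenvalues k • hA.eigenvectorBasis k := by
  apply (WithLp.equiv 2 _).injective
  simp [Matrix.ofLp_toEuclideanLin_apply, hA.mulVec_eigenvectorBasis]

private lemma rayleigh_repr (A : Matrix (Fin n) (Fin n) ℝ) (hA : A.IsHermitian)
    (x : EuclideanSpace ℝ (Fin n)) :
    ⟪x, Matrix.toEuclideanLin A x⟫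
      = ∑ k, hA.eigenvalues k * ⟪hA.eigenvectorBasis k, x⟫ ^ 2 := by
  have hx : x = ∑ k, ⟪hA.eigenvectorBasis k, x⟫ • hA.eigenvectorBasis k :=
    (hA.eigenvectorBasis.sum_repr' x).symm
  calc ⟪x, Matrix.toEuclideanLin A x⟫
      = ⟪x, ∑ k, (⟪hA.eigenvectorBasis k, x⟫ * hA.eigenvalues k) • hA.eigenvectorBasis k⟫ := by
        nth_rewrite 2 [hx]
        rw [map_sum]
        congr 1
        refine Finset.sum_congr rfl fun k _ => ?_
        rw [_root_.map_smul, euclid_eigen A hA k, smul_smul]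
    _ = ∑ k, (⟪hA.eigenvectorBasis k, x⟫ * hA.eigenvalues k) * ⟪hA.eigenvectorBasis k, x⟫ := by
        rw [inner_sum]
        refine Finset.sum_congr rfl fun k _ => ?_
        rw [real_inner_smul_right, real_inner_comm]
    _ = ∑ k, hA.eigenvalues k * ⟪hA.eigenvectorBasis k, x⟫ ^ 2 := by
        refine Finset.sum_congr rfl fun k _ => ?_
        ring

private lemma norm_repr (u : OrthonormalBasis (Fin n) ℝ (EuclideanSpace ℝ (Fin n)))
    (x : EuclideanSpace ℝ (Fin n)) :
    ⟪x, x⟫ = ∑ k, ⟪u k, x⟫ ^ 2 := by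
  nth_rewrite 2 [← u.sum_repr' x]
  rw [inner_sum]
  refine Finset.sum_congr rfl fun k _ => ?_
  rw [real_inner_smul_right, real_inner_comm]
  ring

private lemma rayleigh_le (A : Matrix (Fin n) (Fin n) ℝ) (hA : A.IsHermitian) (μ : ℝ)
    (S : Set (Fin n)) (hS : ∀ k ∈ S, hA.eigenvalues k ≤ μ)
    (x : EuclideanSpace ℝ (Fin n))
    (hx : x ∈ Submodule.span ℝ (hA.eigenvectorBasis '' S)) :
    ⟪x, Matrix.toEuclideanLin A x⟫ ≤ μ * ⟪x, x⟫ := by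
  rw [rayleigh_repr A hA x, norm_repr hA.eigenvectorBasis x, Finset.mul_sum]
  refine Finset.sum_le_sum fun k _ => ?_
  by_cases hk : k ∈ S
  · exact mul_le_mul_of_nonneg_right (hS k hk) (sq_nonneg _)
  · rw [inner_eq_zero_off hA.eigenvectorBasis S x hx k hk]
    simp

private lemma rayleigh_ge (A : Matrix (Fin n) (Fin n) ℝ) (hA : A.IsHermitian) (μ : ℝ)
    (S : Set (Fin n)) (hS : ∀ k ∈ S, μ ≤ hA.eigenvalues k)
    (x : EuclideanSpace ℝ (Fin n))
    (hx : x ∈ Submodule.span ℝ (hA.eigenvectorBasis '' S)) :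
    μ * ⟪x, x⟫ ≤ ⟪x, Matrix.toEuclideanLin A x⟫ := by
  rw [rayleigh_repr A hA x, norm_repr hA.eigenvectorBasis x, Finset.mul_sum]
  refine Finset.sum_le_sum fun k _ => ?_
  by_cases hk : k ∈ S
  · exact mul_le_mul_of_nonneg_right (hS k hk) (sq_nonneg _)
  · rw [inner_eq_zero_off hA.eigenvectorBasis S x hx k hk]
    simp

private lemma finrank_span_image (u : OrthonormalBasis (Fin n) ℝ (EuclideanSpace ℝ (Fin n)))
    (S : Finset (Fin n)) :
    Module.finrank ℝ (Submodule.span ℝ (u '' (S : Set (Fin n)))) = S.card := by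
  have hli : LinearIndependent ℝ (fun k : (S : Set (Fin n)) => u k) :=
    u.orthonormal.linearIndependent.comp _ Subtype.val_injective
  rw [Set.image_eq_range, finrank_span_eq_card hli]
  simp

private lemma card_filter_le (f : Fin n → ℝ) (m : Fin n) :
    m.val + 1 ≤ (Finset.univ.filter fun k => f k ≤ f (Tuple.sort f m)).card := by
  have hmono := Tuple.monotone_sort f
  calc m.val + 1 = (Finset.univ : Finset (Fin (m.val + 1))).card := by simp
    _ ≤ _ := by
        refine Finset.card_le_card_of_injOn
          (fun a => Tuple.sort f ⟨a.val, lt_of_lt_of_le a.isLt m.isLt⟩) (fun a _ => ?_) ?_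
        · simp only [Finset.mem_filter, Finset.mem_univ, true_and]
          exact Finset.mem_coe.mpr (Finset.mem_filter.mpr ⟨Finset.mem_univ _, hmono (show (⟨a.val, lt_of_lt_of_le a.isLt m.isLt⟩ : Fin n) ≤ m by simp [Fin.le_def]; omega)⟩)
        · intro a _ b _ hab
          have := (Tuple.sort f).injective hab
          simp only [Fin.mk.injEq] at this
          exact Fin.ext this

private lemma card_filter_ge (f : Fin n → ℝ) (m : Fin n) :
    n - m.val ≤ (Finset.univ.filter fun k => f (Tuple.sort f m) ≤ f k).card := by
  have hmono := Tuple.monotone_sort f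
  calc n - m.val = (Finset.univ : Finset (Fin (n - m.val))).card := by simp
    _ ≤ _ := by
        refine Finset.card_le_card_of_injOn
          (fun a => Tuple.sort f ⟨m.val + a.val, by omega⟩) (fun a _ => ?_) ?_
        · simp only [Finset.mem_filter, Finset.mem_univ, true_and]
          exact Finset.mem_coe.mpr (Finset.mem_filter.mpr ⟨Finset.mem_univ _, hmono (show m ≤ (⟨m.val + a.val, by omega⟩ : Fin n) by simp [Fin.le_def])⟩)
        · intro a _ b _ hab
          have := (Tuple.sort f).injective hab
          simp only [Fin.mk.injEq] at this
          exact Fin.ext (by omega)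

end weylAux

set_option maxHeartbeats 1000000 in
/-- Weyl's inequality: λ_{i+j-1}(A+B) ≤ λ_i(A) + λ_j(B) (one-based indices). -/
theorem stmt2 (n : ℕ) (A B : Matrix (Fin n) (Fin n) ℝ)
    (hA : A.IsHermitian) (hB : B.IsHermitian)
    (i j : ℕ) (hi : 1 ≤ i) (hj : 1 ≤ j) (hij : i + j - 1 ≤ n) :
    eigDesc (A + B) (hA.add hB) ⟨i + j - 2, by omega⟩ ≤
      eigDesc A hA ⟨i - 1, by omega⟩ + eigDesc B hB ⟨j - 1, by omega⟩ := by
  classical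
  have hn : 1 ≤ n := by omega
  have hC : (A + B).IsHermitian := hA.add hB
  obtain ⟨mA, hmA⟩ : ∃ m : Fin n, m = ⟨n - i, by omega⟩ := ⟨_, rfl⟩
  obtain ⟨mB, hmB⟩ : ∃ m : Fin n, m = ⟨n - j, by omega⟩ := ⟨_, rfl⟩
  obtain ⟨mC, hmC⟩ : ∃ m : Fin n, m = ⟨n - (i + j - 1), by omega⟩ := ⟨_, rfl⟩
  obtain ⟨a, ha⟩ : ∃ x : ℝ, x = hA.eigenvalues (Tuple.sort hA.eigenvalues mA) := ⟨_, rfl⟩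
  obtain ⟨b, hb⟩ : ∃ x : ℝ, x = hB.eigenvalues (Tuple.sort hB.eigenvalues mB) := ⟨_, rfl⟩
  obtain ⟨c, hc⟩ : ∃ x : ℝ, x = hC.eigenvalues (Tuple.sort hC.eigenvalues mC) := ⟨_, rfl⟩
  -- The three subspaces
  obtain ⟨SA, hSA⟩ : ∃ S : Finset (Fin n), S = Finset.univ.filter (fun k => hA.eigenvalues k ≤ a) := ⟨_, rfl⟩
  obtain ⟨SB, hSB⟩ : ∃ S : Finset (Fin n), S = Finset.univ.filter (fun k => hB.eigenvalues k ≤ b) := ⟨_, rfl⟩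
  obtain ⟨SC, hSC⟩ : ∃ S : Finset (Fin n), S = Finset.univ.filter (fun k => c ≤ hC.eigenvalues k) := ⟨_, rfl⟩
  obtain ⟨VA, hVA⟩ : ∃ V : Submodule ℝ (EuclideanSpace ℝ (Fin n)), V = Submodule.span ℝ (hA.eigenvectorBasis '' (SA : Set (Fin n))) := ⟨_, rfl⟩
  obtain ⟨VB, hVB⟩ : ∃ V : Submodule ℝ (EuclideanSpace ℝ (Fin n)), V = Submodule.span ℝ (hB.eigenvectorBasis '' (SB : Set (Fin n))) := ⟨_, rfl⟩
  obtain ⟨VC, hVC⟩ : ∃ V : Submodule ℝ (EuclideanSpace ℝ (Fin n)), V = Submodule.span ℝ (hC.eigenvectorBasis '' (SC : Set (Fin n))) := ⟨_, rfl⟩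
  -- dimension bounds
  have hdA : n - i + 1 ≤ Module.finrank ℝ VA := by
    rw [hVA, finrank_span_image]
    have h := card_filter_le hA.eigenvalues mA
    rw [← ha, ← hSA] at h
    have hv : mA.val = n - i := by rw [hmA]
    omega
  have hdB : n - j + 1 ≤ Module.finrank ℝ VB := by
    rw [hVB, finrank_span_image]
    have h := card_filter_le hB.eigenvalues mB
    rw [← hb, ← hSB] at h
    have hv : mB.val = n - j := by rw [hmB]
    omega
  have hdC : i + j - 1 ≤ Module.finrank ℝ VC := by
    rw [hVC, finrank_span_image]
    have h := card_filter_ge hC.eigenvalues mC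
    rw [← hc, ← hSC] at h
    have hv : mC.val = n - (i + j - 1) := by rw [hmC]
    omega
  have htot : Module.finrank ℝ (EuclideanSpace ℝ (Fin n)) = n := by
    simp [finrank_euclideanSpace]
  -- intersection is nontrivial
  have hsup1 : Module.finrank ℝ ↥(VA ⊔ VB) ≤ n :=
    le_trans (Submodule.finrank_le _) (le_of_eq htot)
  have heq1 := Submodule.finrank_sup_add_finrank_inf_eq VA VB
  have hd1 : n + 2 ≤ Module.finrank ℝ ↥(VA ⊓ VB) + i + j := by omega
  have hsup2 : Module.finrank ℝ ↥((VA ⊓ VB) ⊔ VC) ≤ n :=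
    le_trans (Submodule.finrank_le _) (le_of_eq htot)
  have heq2 := Submodule.finrank_sup_add_finrank_inf_eq (VA ⊓ VB) VC
  have hd2 : 1 ≤ Module.finrank ℝ ↥(VA ⊓ VB ⊓ VC) := by omega
  have hne : (VA ⊓ VB ⊓ VC) ≠ ⊥ := by
    intro h
    rw [h, finrank_bot] at hd2
    omega
  obtain ⟨x, hxW, hx0⟩ := (VA ⊓ VB ⊓ VC).ne_bot_iff.mp hne
  have hxA : x ∈ VA := hxW.1.1
  have hxB : x ∈ VB := hxW.1.2
  have hxC : x ∈ VC := hxW.2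
  -- Rayleigh quotient bounds
  rw [hVA] at hxA
  rw [hVB] at hxB
  rw [hVC] at hxC
  have hra : ⟪x, Matrix.toEuclideanLin A x⟫ ≤ a * ⟪x, x⟫ :=
    rayleigh_le A hA a (SA : Set (Fin n))
      (by intro k hk; rw [hSA] at hk; simpa using hk) x hxA
  have hrb : ⟪x, Matrix.toEuclideanLin B x⟫ ≤ b * ⟪x, x⟫ :=
    rayleigh_le B hB b (SB : Set (Fin n))
      (by intro k hk; rw [hSB] at hk; simpa using hk) x hxB
  have hrc : c * ⟪x, x⟫ ≤ ⟪x, Matrix.toEuclideanLin (A + B) x⟫ :=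
    rayleigh_ge (A + B) hC c (SC : Set (Fin n))
      (by intro k hk; rw [hSC] at hk; simpa using hk) x hxC
  have hadd : Matrix.toEuclideanLin (A + B) x
      = Matrix.toEuclideanLin A x + Matrix.toEuclideanLin B x := by
    rw [map_add]
    rfl
  have hpos : (0 : ℝ) < ⟪x, x⟫ :=
    lt_of_le_of_ne real_inner_self_nonneg (fun h => hx0 (inner_self_eq_zero.mp h.symm))
  have hmain : c ≤ a + b := by
    have h1 : c * ⟪x, x⟫ ≤ (a + b) * ⟪x, x⟫ := by
      refine le_trans hrc ?_
      rw [hadd, inner_add_right, add_mul]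
      exact add_le_add hra hrb
    exact le_of_mul_le_mul_right h1 hpos
  -- translate the statement into a, b, c
  have e1 : (Fin.rev ⟨i - 1, by omega⟩ : Fin n) = mA := by
    ext
    simp [Fin.val_rev, hmA]
    omega
  have e2 : (Fin.rev ⟨j - 1, by omega⟩ : Fin n) = mB := by
    ext
    simp [Fin.val_rev, hmB]
    omega
  have e3 : (Fin.rev ⟨i + j - 2, by omega⟩ : Fin n) = mC := by
    ext
    simp [Fin.val_rev, hmC]
    omega
  simp only [eigDesc, Function.comp_apply]
  rw [e1, e2, e3, ← ha, ← hb]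
  have : (hA.add hB).eigenvalues (Tuple.sort (hA.add hB).eigenvalues mC) = c := by
    rw [hc]
  rw [this]
  exact hmain
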